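/- (Duality of comultiplication and multiplication via the trace) For all x, y, z ∈ A, applying to Δ(x) the R-linear map A ⊗_R A → R induced by u ⊗ v ↦ ε(u·y)·ε(v·z) yields ε(x·y·z). -/

import Mathlib

open Polynomial TensorProduct

/-- `R = ℤ[i][a]`: the polynomial ring in one variable (called `a`, the
indeterminate `Polynomial.X`) over the Gaussian integers `ℤ[i]`. -/
noncomputable abbrev GaussR : Type := Polynomial GaussianInt

/-- The polynomial `X² − a` over `R = ℤ[i][a]`. -/
noncomputable def sl2Poly : Polynomial GaussR := X ^ 2 - C X

/-- `A = R[X]/(X² − a)`. -/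
noncomputable abbrev sl2A : Type := AdjoinRoot sl2Poly

lemma sl2Poly_monic : sl2Poly.Monic := by
  have h : (C (X : GaussR)).degree < 2 := lt_of_le_of_lt degree_C_le (by norm_num)
  simpa [sl2Poly] using Polynomial.monic_X_pow_sub (n := 2) h

lemma sl2_root_sq : AdjoinRoot.root sl2Poly * AdjoinRoot.root sl2Poly
    = (X : GaussR) • (1 : sl2A) := by
  have h : AdjoinRoot.mk sl2Poly (X ^ 2 - C X) = 0 := by
    rw [← sl2Poly]; exact AdjoinRoot.mk_self
  rw [map_sub, map_pow, AdjoinRoot.mk_X, AdjoinRoot.mk_C, sub_eq_zero] at h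
  rw [← sq, h, Algebra.smul_def, mul_one]
  rfl

lemma sl2_repr (p : sl2A) : ∃ c d : GaussR,
    p = c • (1 : sl2A) + d • AdjoinRoot.root sl2Poly := by
  obtain ⟨q, rfl⟩ := AdjoinRoot.mk_surjective p
  have hm := sl2Poly_monic
  have hdeg : sl2Poly.degree = 2 := by
    rw [sl2Poly]
    rw [degree_sub_eq_left_of_degree_lt]
    · simp
    · refine lt_of_le_of_lt degree_C_le ?_
      simp
  have hq : AdjoinRoot.mk sl2Poly q = AdjoinRoot.mk sl2Poly (q %ₘ sl2Poly) := by
    rw [eq_comm, AdjoinRoot.mk_eq_mk]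
    refine ⟨-(q /ₘ sl2Poly), ?_⟩
    have h := modByMonic_add_div q sl2Poly
    linear_combination h
  have hlt : (q %ₘ sl2Poly).degree ≤ 1 := by
    have := degree_modByMonic_lt q hm
    rw [hdeg] at this
    rcases hd : (q %ₘ sl2Poly).degree with _ | n
    · exact bot_le
    · rw [hd, WithBot.some_eq_coe] at this
      rw [WithBot.some_eq_coe]
      have hn : n < 2 := WithBot.coe_lt_coe.mp this
      have h1 : n ≤ 1 := Nat.lt_succ_iff.mp hn
      rw [show (1 : WithBot ℕ) = ((1 : ℕ) : WithBot ℕ) from rfl]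
      exact WithBot.coe_le_coe.mpr h1
  refine ⟨(q %ₘ sl2Poly).coeff 0, (q %ₘ sl2Poly).coeff 1, ?_⟩
  rw [hq]
  conv_lhs => rw [eq_X_add_C_of_degree_le_one hlt]
  rw [map_add, map_mul, AdjoinRoot.mk_X, AdjoinRoot.mk_C, AdjoinRoot.mk_C,
    Algebra.smul_def, Algebra.smul_def, mul_one, add_comm]
  rfl

/-- (Duality of comultiplication and multiplication via the trace) For the
trace `ε` (`ε(1) = 0`, `ε(X) = 1`) and the comultiplication `Δ`
(`Δ(1) = 1 ⊗ X + X ⊗ 1`, `Δ(X) = X ⊗ X + a·(1 ⊗ 1)`): for all `x, y, z ∈ A`,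
applying to `Δ(x)` the `R`-linear map `A ⊗_R A → R` induced by
`u ⊗ v ↦ ε(u·y)·ε(v·z)` yields `ε(x·y·z)`. -/
theorem comultiplication_dual_to_multiplication
    (ε : sl2A →ₗ[GaussR] GaussR)
    (hε1 : ε 1 = 0) (hεX : ε (AdjoinRoot.root sl2Poly) = 1)
    (Δ : sl2A →ₗ[GaussR] sl2A ⊗[GaussR] sl2A)
    (hΔ1 : Δ 1 = 1 ⊗ₜ AdjoinRoot.root sl2Poly + AdjoinRoot.root sl2Poly ⊗ₜ 1)
    (hΔX : Δ (AdjoinRoot.root sl2Poly) =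
      AdjoinRoot.root sl2Poly ⊗ₜ AdjoinRoot.root sl2Poly +
        (X : GaussR) • ((1 : sl2A) ⊗ₜ (1 : sl2A))) :
    ∀ x y z : sl2A,
      TensorProduct.lid GaussR GaussR
        (TensorProduct.map (ε ∘ₗ LinearMap.mulRight GaussR y)
          (ε ∘ₗ LinearMap.mulRight GaussR z) (Δ x)) = ε (x * y * z) := by
  intro x y z
  obtain ⟨x0, x1, rfl⟩ := sl2_repr x
  obtain ⟨y0, y1, rfl⟩ := sl2_repr y
  obtain ⟨z0, z1, rfl⟩ := sl2_repr z
  simp only [map_add, map_smul, hΔ1, hΔX, smul_add,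
    TensorProduct.map_tmul, TensorProduct.smul_tmul', TensorProduct.tmul_smul,
    LinearMap.comp_apply, LinearMap.mulRight_apply,
    TensorProduct.lid_tmul,
    add_mul, mul_add, one_mul, mul_one, smul_mul_assoc, mul_smul_comm, sl2_root_sq,
    smul_smul, hε1, hεX, smul_eq_mul]
  ring
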